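/- arXiv:1501.00320 — 5 statements merged into one kernel-verified Lean document; each statement's English description precedes it below -/
import Mathlib

section
/- Let A be a D×n complex matrix (D, n positive integers) all of whose columns have unit Euclidean norm, and let μ be its mutual incoherence. Then for every integer s ≥ 1 and every vector X ∈ ℂ^n with at most s nonzero entries, max(0, 1 − μ·(s−1)) · ‖X‖² ≤ ‖A X‖² ≤ (1 + μ·(s−1)) · ‖X‖², where ‖·‖ denotes the Euclidean norm. -/
open scoped BigOperators

/-- The mutual incoherence of a matrix `A`: the supremum over pairs of distinct
column indices `p ≠ q` of `|a(p)† a(q)| / (‖a(p)‖ ‖a(q)‖)`. -/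
noncomputable def mutualIncoherence {D n : ℕ} (A : Matrix (Fin D) (Fin n) ℂ) : ℝ :=
  sSup {x : ℝ | ∃ p q : Fin n, p ≠ q ∧
    x = ‖∑ i, (starRingEnd ℂ) (A i p) * A i q‖ /
      (Real.sqrt (∑ i, ‖A i p‖ ^ 2) * Real.sqrt (∑ i, ‖A i q‖ ^ 2))}

/-- (STATEMENT 0) RIP bound from mutual incoherence: for a `D × n` complex matrix `A` with
unit-norm columns and mutual incoherence `μ`, every `s`-sparse vector `X` satisfies
`max 0 (1 - μ(s-1)) ‖X‖² ≤ ‖A X‖² ≤ (1 + μ(s-1)) ‖X‖²`. -/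
theorem rip_of_mutualIncoherence {D n : ℕ} (hD : 0 < D) (hn : 0 < n)
    (A : Matrix (Fin D) (Fin n) ℂ)
    (hcol : ∀ p : Fin n, ∑ i, ‖A i p‖ ^ 2 = 1)
    (μ : ℝ) (hμ : μ = mutualIncoherence A)
    (s : ℕ) (hs : 1 ≤ s)
    (X : Fin n → ℂ) (hX : (Finset.univ.filter fun j => X j ≠ 0).card ≤ s) :
    max 0 (1 - μ * ((s : ℝ) - 1)) * ∑ j, ‖X j‖ ^ 2 ≤ ∑ i, ‖A.mulVec X i‖ ^ 2 ∧
      ∑ i, ‖A.mulVec X i‖ ^ 2 ≤ (1 + μ * ((s : ℝ) - 1)) * ∑ j, ‖X j‖ ^ 2 := by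
  classical
  set v : Fin n → EuclideanSpace ℂ (Fin D) := fun p => WithLp.toLp 2 (fun i => A i p) with hv
  have hvnorm : ∀ p, ‖v p‖ = 1 := by
    intro p
    rw [EuclideanSpace.norm_eq]
    simp only [hv, PiLp.toLp_apply]
    rw [hcol p, Real.sqrt_one]
  have hinner : ∀ p q, (inner ℂ (v p) (v q) : ℂ) = ∑ i, (starRingEnd ℂ) (A i p) * A i q := by
    intro p q
    simp [PiLp.inner_apply, hv, RCLike.inner_apply, mul_comm]
  -- mutual incoherence facts
  have hSeq : ∀ p q : Fin n,
      ‖∑ i, (starRingEnd ℂ) (A i p) * A i q‖ /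
        (Real.sqrt (∑ i, ‖A i p‖ ^ 2) * Real.sqrt (∑ i, ‖A i q‖ ^ 2))
      = ‖(inner ℂ (v p) (v q) : ℂ)‖ := by
    intro p q
    rw [hcol p, hcol q, Real.sqrt_one, one_mul, div_one, hinner]
  have hbdd : BddAbove {x : ℝ | ∃ p q : Fin n, p ≠ q ∧
      x = ‖∑ i, (starRingEnd ℂ) (A i p) * A i q‖ /
        (Real.sqrt (∑ i, ‖A i p‖ ^ 2) * Real.sqrt (∑ i, ‖A i q‖ ^ 2))} := by
    refine ⟨1, ?_⟩
    rintro x ⟨p, q, hpq, rfl⟩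
    rw [hSeq p q]
    calc ‖(inner ℂ (v p) (v q) : ℂ)‖ ≤ ‖v p‖ * ‖v q‖ := norm_inner_le_norm _ _
      _ = 1 := by rw [hvnorm p, hvnorm q, one_mul]
  have hμ0 : 0 ≤ μ := by
    rw [hμ, mutualIncoherence]
    refine Real.sSup_nonneg ?_
    rintro x ⟨p, q, hpq, rfl⟩
    positivity
  have hG : ∀ p q : Fin n, p ≠ q → ‖(inner ℂ (v p) (v q) : ℂ)‖ ≤ μ := by
    intro p q hpq
    rw [hμ, mutualIncoherence]
    rw [← hSeq p q]
    exact le_csSup hbdd ⟨p, q, hpq, rfl⟩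
  set Q : ℝ := ∑ j, ‖X j‖ ^ 2 with hQ
  have hQ0 : 0 ≤ Q := Finset.sum_nonneg fun j _ => by positivity
  set y : EuclideanSpace ℂ (Fin D) := ∑ j, X j • v j with hy
  have hyi : ∀ i, A.mulVec X i = y i := by
    intro i
    simp only [hy, Matrix.mulVec, dotProduct]
    rw [WithLp.ofLp_sum, Finset.sum_apply]
    exact Finset.sum_congr rfl fun j _ => by simp [hv, mul_comm]
  have hnAX : ∑ i, ‖A.mulVec X i‖ ^ 2 = RCLike.re (inner ℂ y y : ℂ) := by
    rw [inner_self_eq_norm_sq, EuclideanSpace.norm_eq,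
      Real.sq_sqrt (Finset.sum_nonneg fun i _ => by positivity)]
    exact Finset.sum_congr rfl fun i _ => by rw [hyi i]
  have hexp : (inner ℂ y y : ℂ) = ∑ j, ∑ k,
      (starRingEnd ℂ) (X j) * X k * inner ℂ (v j) (v k) := by
    rw [hy, sum_inner]
    refine Finset.sum_congr rfl fun j _ => ?_
    rw [inner_smul_left, inner_sum, Finset.mul_sum]
    refine Finset.sum_congr rfl fun k _ => ?_
    rw [inner_smul_right]
    ring
  set E : ℂ := ∑ j, ∑ k ∈ Finset.univ.erase j,
      (starRingEnd ℂ) (X j) * X k * inner ℂ (v j) (v k) with hE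
  have hsplit : (inner ℂ y y : ℂ) = (Q : ℂ) + E := by
    rw [hexp, hE, hQ]
    push_cast
    rw [← Finset.sum_add_distrib]
    refine Finset.sum_congr rfl fun j _ => ?_
    rw [← Finset.add_sum_erase _ _ (Finset.mem_univ j)]
    congr 1
    rw [inner_self_eq_norm_sq_to_K, hvnorm j, RCLike.conj_mul]
    norm_num
  have hmain : ∑ i, ‖A.mulVec X i‖ ^ 2 = Q + E.re := by
    rw [hnAX, hsplit]
    simp
  set B : ℝ := ∑ j, ‖X j‖ with hB
  have hsum_erase : ∑ j, ∑ k ∈ Finset.univ.erase j, ‖X j‖ * ‖X k‖ = B ^ 2 - Q := by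
    have h1 : ∀ j : Fin n, ∑ k ∈ Finset.univ.erase j, ‖X j‖ * ‖X k‖
        = ‖X j‖ * B - ‖X j‖ ^ 2 := by
      intro j
      rw [← Finset.mul_sum, Finset.sum_erase_eq_sub (Finset.mem_univ j), ← hB, mul_sub, sq]
    rw [Finset.sum_congr rfl fun j _ => h1 j, Finset.sum_sub_distrib, ← Finset.sum_mul,
      ← hB, ← hQ, sq]
  have hEbound : ‖E‖ ≤ μ * (B ^ 2 - Q) := by
    rw [← hsum_erase, Finset.mul_sum]
    calc ‖E‖ ≤ ∑ j, ‖∑ k ∈ Finset.univ.erase j,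
          (starRingEnd ℂ) (X j) * X k * inner ℂ (v j) (v k)‖ := norm_sum_le _ _
      _ ≤ ∑ j, μ * ∑ k ∈ Finset.univ.erase j, ‖X j‖ * ‖X k‖ := by
          refine Finset.sum_le_sum fun j _ => ?_
          rw [Finset.mul_sum]
          refine le_trans (norm_sum_le _ _) (Finset.sum_le_sum fun k hk => ?_)
          have hk' : j ≠ k := (Finset.ne_of_mem_erase hk).symm
          calc ‖(starRingEnd ℂ) (X j) * X k * inner ℂ (v j) (v k)‖
              = (‖X j‖ * ‖X k‖) * ‖(inner ℂ (v j) (v k) : ℂ)‖ := by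
                rw [norm_mul, norm_mul, RCLike.norm_conj]
            _ ≤ (‖X j‖ * ‖X k‖) * μ :=
                mul_le_mul_of_nonneg_left (hG j k hk') (by positivity)
            _ = μ * (‖X j‖ * ‖X k‖) := mul_comm _ _
  have hBsq : B ^ 2 ≤ (s : ℝ) * Q := by
    have hBT : B = ∑ j ∈ Finset.univ.filter (fun j => X j ≠ 0), ‖X j‖ := by
      rw [hB]
      exact (Finset.sum_filter_of_ne fun j _ h => norm_ne_zero_iff.mp h).symm
    calc B ^ 2 = (∑ j ∈ Finset.univ.filter (fun j => X j ≠ 0), ‖X j‖) ^ 2 := by rw [hBT]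
      _ ≤ (Finset.univ.filter (fun j => X j ≠ 0)).card
            * ∑ j ∈ Finset.univ.filter (fun j => X j ≠ 0), ‖X j‖ ^ 2 :=
          sq_sum_le_card_mul_sum_sq
      _ ≤ (s : ℝ) * Q := by
          refine mul_le_mul ?_ ?_ ?_ ?_
          · exact_mod_cast hX
          · exact Finset.sum_le_sum_of_subset_of_nonneg (Finset.filter_subset _ _)
              fun j _ _ => by positivity
          · exact Finset.sum_nonneg fun j _ => by positivity
          · positivity
  have hre : |E.re| ≤ μ * ((s : ℝ) - 1) * Q := by
    calc |E.re| ≤ ‖E‖ := by exact Complex.abs_re_le_norm E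
      _ ≤ μ * (B ^ 2 - Q) := hEbound
      _ ≤ μ * ((s : ℝ) - 1) * Q := by nlinarith [hμ0, hBsq, hQ0]
  have hre1 := (abs_le.mp hre).1
  have hre2 := (abs_le.mp hre).2
  have hANN : 0 ≤ ∑ i, ‖A.mulVec X i‖ ^ 2 := Finset.sum_nonneg fun i _ => by positivity
  constructor
  · rcases le_total (1 - μ * ((s : ℝ) - 1)) 0 with h | h
    · rw [max_eq_left h, zero_mul]
      exact hANN
    · have hc : (1 - μ * ((s : ℝ) - 1)) * Q = Q - μ * ((s : ℝ) - 1) * Q := by ring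
      rw [max_eq_right h, hmain, hc]
      linarith [hre1]
  · have hc : (1 + μ * ((s : ℝ) - 1)) * Q = Q + μ * ((s : ℝ) - 1) * Q := by ring
    rw [hmain, hc]
    linarith [hre2]
end

section
/- Let n ≥ 2 and D ≥ 1 be integers, let r_0, …, r_{D−1} be independent random variables each uniformly distributed on {0, 1, …, n−1}, and for ℓ ∈ {1,…,n−1} define μ(ℓ) = |Σ_{s=0}^{D−1} exp(i 2π ℓ r_s / n)| / D. Then with probability at least 0.2 over the choice of r_0, …, r_{D−1}, one has max_{1 ≤ ℓ ≤ n−1} μ(ℓ) < 2 √(log(5n) / D). -/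
open scoped BigOperators
open MeasureTheory ProbabilityTheory Real

lemma exp_mul_le_of_abs_le {l x : ℝ} (hx : |x| ≤ 1) :
    Real.exp (l * x) ≤ Real.cosh l + x * Real.sinh l := by
  obtain ⟨hx1, hx2⟩ := abs_le.mp hx
  have h := convexOn_exp.2 (Set.mem_univ l) (Set.mem_univ (-l))
    (show (0:ℝ) ≤ (1 + x) / 2 by linarith) (show (0:ℝ) ≤ (1 - x) / 2 by linarith)
    (show (1 + x) / 2 + (1 - x) / 2 = 1 by ring)
  simp only [smul_eq_mul] at h
  have h1 : (1 + x) / 2 * l + (1 - x) / 2 * (-l) = l * x := by ring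
  rw [h1] at h
  rw [Real.cosh_eq, Real.sinh_eq]
  calc Real.exp (l * x) ≤ (1 + x) / 2 * Real.exp l + (1 - x) / 2 * Real.exp (-l) := h
    _ = (Real.exp l + Real.exp (-l)) / 2 + x * ((Real.exp l - Real.exp (-l)) / 2) := by ring

lemma tail_bound {Ω : Type*} [MeasurableSpace Ω] (P : Measure Ω) [IsProbabilityMeasure P]
    {D : ℕ} (hD : 0 < D) (X : Fin D → Ω → ℝ)
    (hXmeas : ∀ s, Measurable (X s))
    (hXindep : iIndepFun X P)
    (hXbdd : ∀ s ω, |X s ω| ≤ 1)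
    (hXmean : ∀ s, ∫ ω, X s ω ∂P = 0)
    {a : ℝ} (ha : 0 ≤ a) :
    (P {ω | a ≤ ∑ s, X s ω}).toReal ≤ Real.exp (-a ^ 2 / (2 * D)) := by
  set l : ℝ := a / D with hl
  have hl0 : 0 ≤ l := div_nonneg ha (Nat.cast_nonneg D)
  have hint : ∀ s : Fin D, Integrable (fun ω => Real.exp (l * X s ω)) P := by
    intro s
    refine (integrable_const (Real.exp l)).mono'
      (((hXmeas s).const_mul l).exp.aestronglyMeasurable) (ae_of_all _ fun ω => ?_)
    rw [Real.norm_eq_abs, abs_of_pos (Real.exp_pos _)]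
    apply Real.exp_le_exp.2
    calc l * X s ω ≤ l * |X s ω| := by
          exact mul_le_mul_of_nonneg_left (le_abs_self _) hl0
      _ ≤ l * 1 := mul_le_mul_of_nonneg_left (hXbdd s ω) hl0
      _ = l := mul_one l
  have hmgf : ∀ s : Fin D, mgf (X s) P l ≤ Real.exp (l ^ 2 / 2) := by
    intro s
    have hXint : Integrable (X s) P := by
      refine (integrable_const (1:ℝ)).mono'
        ((hXmeas s).aestronglyMeasurable) (ae_of_all _ fun ω => ?_)
      simpa using hXbdd s ω
    have h1 : mgf (X s) P l ≤ ∫ ω, (Real.cosh l + X s ω * Real.sinh l) ∂P := by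
      refine integral_mono (hint s) ((integrable_const _).add (hXint.mul_const _)) ?_
      intro ω
      exact exp_mul_le_of_abs_le (hXbdd s ω)
    rw [integral_add (integrable_const _) (hXint.mul_const _), integral_const,
      integral_mul_const, hXmean s, probReal_univ] at h1
    simp only [ENNReal.toReal_one, smul_eq_mul, one_mul, zero_mul, add_zero] at h1
    calc mgf (X s) P l ≤ Real.cosh l := h1
      _ ≤ Real.exp (l ^ 2 / 2) := Real.cosh_le_exp_half_sq l
  have hchern := measure_ge_le_exp_mul_mgf (X := ∑ s, X s) (μ := P) a hl0
    (hXindep.integrable_exp_mul_sum hXmeas (fun s _ => hint s))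
  rw [hXindep.mgf_sum hXmeas] at hchern
  have hset : {ω | a ≤ ∑ s, X s ω} = {ω | a ≤ (∑ s, X s) ω} := by
    ext ω; simp [Finset.sum_apply]
  rw [hset]
  refine hchern.trans ?_
  have hprod : (∏ s : Fin D, mgf (X s) P l) ≤ Real.exp (l ^ 2 / 2) ^ D := by
    calc (∏ s : Fin D, mgf (X s) P l) ≤ ∏ s : Fin D, Real.exp (l ^ 2 / 2) :=
          Finset.prod_le_prod (fun s _ => mgf_nonneg) (fun s _ => hmgf s)
      _ = Real.exp (l ^ 2 / 2) ^ D := by simp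
  calc Real.exp (-l * a) * ∏ s : Fin D, mgf (X s) P l
      ≤ Real.exp (-l * a) * Real.exp (l ^ 2 / 2) ^ D :=
        mul_le_mul_of_nonneg_left hprod (Real.exp_pos _).le
    _ = Real.exp (-l * a + D * (l ^ 2 / 2)) := by
        rw [← Real.exp_nat_mul, ← Real.exp_add]
    _ = Real.exp (-a ^ 2 / (2 * D)) := by
        congr 1
        have hDne : (D : ℝ) ≠ 0 := Nat.cast_ne_zero.2 hD.ne'
        field_simp [hl]
        have hlD : l * D = a := by rw [hl]; exact div_mul_cancel₀ a hDne
        linear_combination (l * D - a) * hlD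

lemma integral_uniform {Ω : Type*} [MeasurableSpace Ω] (P : Measure Ω) [IsProbabilityMeasure P]
    {n : ℕ} (R : Ω → ℕ) (hR : Measurable R)
    (hunif : ∀ m : ℕ, P {ω | R ω = m} = if m < n then ((n : ENNReal))⁻¹ else 0)
    (g : ℕ → ℝ) :
    ∫ ω, g (R ω) ∂P = (∑ m ∈ Finset.range n, g m) / n := by
  have hae : ∀ᵐ ω ∂P, R ω < n := by
    have : P {ω | ¬ R ω < n} = 0 := by
      have hsub : {ω | ¬ R ω < n} ⊆ ⋃ m ∈ {m : ℕ | ¬ m < n}, {ω | R ω = m} := by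
        intro ω hω
        exact Set.mem_biUnion hω rfl
      refine measure_mono_null hsub ?_
      refine (measure_biUnion_null_iff (Set.to_countable _)).2 fun m hm => ?_
      rw [hunif m, if_neg hm]
    exact this
  have heq : ∀ᵐ ω ∂P, g (R ω) =
      ∑ m ∈ Finset.range n, Set.indicator {ω | R ω = m} (fun _ => g m) ω := by
    filter_upwards [hae] with ω hω
    rw [Finset.sum_eq_single (R ω)]
    · simp [Set.indicator_apply]
    · intro m _ hm
      simp only [Set.indicator_apply, Set.mem_setOf_eq]
      rw [if_neg (fun h => hm h.symm)]
    · intro h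
      exact absurd (Finset.mem_range.2 hω) h
  rw [integral_congr_ae heq, integral_finset_sum]
  · have : ∀ m ∈ Finset.range n,
        ∫ ω, Set.indicator {ω | R ω = m} (fun _ => g m) ω ∂P = g m / n := by
      intro m hm
      have hset : {ω | R ω = m} = R ⁻¹' {m} := rfl
      rw [hset, integral_indicator_const (g m) (hR (measurableSet_singleton m)), ← hset, measureReal_def, hunif m,
        if_pos (Finset.mem_range.1 hm)]
      simp [ENNReal.toReal_inv, div_eq_inv_mul]
    rw [Finset.sum_congr rfl this, ← Finset.sum_div]
  · intro m _
    exact (integrable_const (g m)).indicator (hR (measurableSet_singleton m))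

lemma sum_exp_zero {n ℓ : ℕ} (h0 : 0 < ℓ) (h1 : ℓ < n) :
    ∑ m ∈ Finset.range n, Complex.exp (Complex.I * (2 * π * ℓ * m / n)) = 0 := by
  have hn0 : (n : ℂ) ≠ 0 := Nat.cast_ne_zero.2 (by omega)
  set x : ℂ := Complex.exp (Complex.I * (2 * π * ℓ / n)) with hx
  have hterm : ∀ m : ℕ, Complex.exp (Complex.I * (2 * π * ℓ * m / n)) = x ^ m := by
    intro m
    rw [hx, ← Complex.exp_nat_mul]
    congr 1
    ring
  have hxn : x ^ n = 1 := by
    rw [hx, ← Complex.exp_nat_mul]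
    have : (n : ℂ) * (Complex.I * (2 * π * ℓ / n)) = (ℓ : ℤ) * (2 * π * Complex.I) := by
      push_cast
      field_simp
    rw [this, Complex.exp_int_mul_two_pi_mul_I]
  have hx1 : x ≠ 1 := by
    intro hcon
    rw [hx, Complex.exp_eq_one_iff] at hcon
    obtain ⟨k, hk⟩ := hcon
    have hI : Complex.I * (2 * π * ℓ / n) = Complex.I * (k * (2 * π)) := by
      rw [hk]; ring
    have h2 : (2 * (π : ℂ) * ℓ / n) = k * (2 * π) :=
      mul_left_cancel₀ Complex.I_ne_zero hI
    have h3 : (2 * π * (ℓ : ℝ) / n : ℝ) = (k : ℝ) * (2 * π) := by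
      exact_mod_cast h2
    have hnR : (n : ℝ) ≠ 0 := Nat.cast_ne_zero.2 (by omega)
    have h4 : (ℓ : ℝ) = (k : ℝ) * n := by
      field_simp at h3
      nlinarith [Real.pi_pos, h3]
    have h5 : (ℓ : ℤ) = k * n := by exact_mod_cast h4
    have hl1 : (0 : ℤ) < ℓ := by exact_mod_cast h0
    have hl2 : (ℓ : ℤ) < n := by exact_mod_cast h1
    rcases le_or_gt k 0 with hk0 | hk1
    · nlinarith [mul_le_mul_of_nonneg_right hk0 (show (0:ℤ) ≤ n by positivity)]
    · have : (1 : ℤ) ≤ k := hk1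
      nlinarith [mul_le_mul_of_nonneg_right this (show (0:ℤ) ≤ n by positivity)]
  calc ∑ m ∈ Finset.range n, Complex.exp (Complex.I * (2 * π * ℓ * m / n))
      = ∑ m ∈ Finset.range n, x ^ m := Finset.sum_congr rfl fun m _ => hterm m
    _ = (x ^ n - 1) / (x - 1) := geom_sum_eq hx1 n
    _ = 0 := by rw [hxn]; simp

lemma le_abs_of_sq_le_sq' {a u : ℝ} (ha : 0 ≤ a) (h : a ^ 2 ≤ u ^ 2) : a ≤ |u| := by
  rw [← Real.sqrt_sq ha, ← Real.sqrt_sq_eq_abs]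
  exact Real.sqrt_le_sqrt h

lemma sq_disj {a u v : ℝ} (h : 2 * a ^ 2 ≤ u ^ 2 + v ^ 2) : a ^ 2 ≤ u ^ 2 ∨ a ^ 2 ≤ v ^ 2 := by
  rcases le_or_gt (a ^ 2) (u ^ 2) with h' | h'
  · exact Or.inl h'
  · exact Or.inr (by linarith)

/-- (STATEMENT 5, the paper's Lemma 1) For i.i.d. shifts `r_0, …, r_{D-1}` uniform on
`{0, …, n-1}`, with probability at least `0.2`, the normalized exponential sums
`μ(ℓ) = |Σ_s exp(i 2π ℓ r_s / n)| / D` satisfy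
`max_{1 ≤ ℓ ≤ n-1} μ(ℓ) < 2 √(log(5n) / D)`. -/
theorem coherence_bound_whp
    {Ω : Type*} [MeasurableSpace Ω] (P : Measure Ω) [IsProbabilityMeasure P]
    (n D : ℕ) (hn : 2 ≤ n) (hD : 1 ≤ D)
    (r : Fin D → Ω → ℕ) (hmeas : ∀ s, Measurable (r s))
    (hindep : iIndepFun r P)
    (hunif : ∀ s : Fin D, ∀ m : ℕ,
      P {ω | r s ω = m} = if m < n then ((n : ENNReal))⁻¹ else 0) :
    ENNReal.ofReal 0.2 ≤
      P {ω | ∀ ℓ : ℕ, 1 ≤ ℓ → ℓ ≤ n - 1 →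
        ‖∑ s, Complex.exp (Complex.I * (2 * π * ℓ * (r s ω) / n))‖ / D <
          2 * Real.sqrt (Real.log (5 * n) / D)} := by
  have hD0 : 0 < D := hD
  have hDR : (0:ℝ) < D := by exact_mod_cast hD0
  have hnR : (0:ℝ) < n := by positivity
  have hlog : 0 ≤ Real.log (5 * n) := Real.log_nonneg (by
    have : (1:ℝ) ≤ (n:ℝ) := by exact_mod_cast (by omega : 1 ≤ n)
    nlinarith)
  set t : ℝ := 2 * Real.sqrt (Real.log (5 * n) / D) with ht
  have ht0 : 0 ≤ t := by positivity
  have ht2 : t ^ 2 = 4 * (Real.log (5 * n) / D) := by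
    rw [ht, mul_pow, Real.sq_sqrt (div_nonneg hlog hDR.le)]
    norm_num
  set a : ℝ := t * D / Real.sqrt 2 with hadef
  have ha : 0 ≤ a := by positivity
  have hs2 : Real.sqrt 2 ^ 2 = 2 := Real.sq_sqrt (by norm_num)
  have ha2 : a ^ 2 = t ^ 2 * D ^ 2 / 2 := by
    rw [hadef, div_pow, hs2, mul_pow]
  have halog : a ^ 2 / (2 * D) = Real.log (5 * n) := by
    rw [ha2, ht2]
    field_simp
    ring
  clear_value a
  clear_value t
  -- key tail estimate for any bounded mean-zero g
  have key : ∀ g : ℕ → ℝ, (∀ m, |g m| ≤ 1) → (∑ m ∈ Finset.range n, g m) = 0 →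
      P {ω | a ≤ ∑ s, g (r s ω)} ≤ ENNReal.ofReal ((5 * (n:ℝ))⁻¹) := by
    intro g hgb hg0
    have hmeas' : ∀ s : Fin D, Measurable (fun ω => g (r s ω)) :=
      fun s => measurable_from_top.comp (hmeas s)
    have hindep' : iIndepFun (fun s ω => g (r s ω)) P :=
      hindep.comp (fun _ => g) (fun _ => measurable_from_top)
    have hmean : ∀ s : Fin D, ∫ ω, g (r s ω) ∂P = 0 := by
      intro s
      rw [integral_uniform P (r s) (hmeas s) (hunif s) g, hg0, zero_div]
    have htail := tail_bound P hD0 (fun s ω => g (r s ω)) hmeas' hindep'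
      (fun s ω => hgb _) hmean ha
    have hne : P {ω | a ≤ ∑ s, g (r s ω)} ≠ ⊤ := measure_ne_top _ _
    rw [← ENNReal.ofReal_toReal hne]
    refine ENNReal.ofReal_le_ofReal (htail.trans ?_)
    rw [show -a ^ 2 / (2 * (D:ℝ)) = -(a ^ 2 / (2 * D)) by ring, halog,
      Real.exp_neg, Real.exp_log (by positivity)]
  -- the bad events
  set Bg : (ℕ → ℝ) → Set Ω := fun g => {ω | a ≤ ∑ s, g (r s ω)} with hBg
  have hmain : ∀ ℓ ∈ Finset.Icc 1 (n - 1),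
      P {ω | t * D ≤ ‖∑ s, Complex.exp (Complex.I * (2 * π * ℓ * (r s ω) / n))‖}
        ≤ ENNReal.ofReal (4 * (5 * (n:ℝ))⁻¹) := by
    intro ℓ hℓ
    obtain ⟨hℓ1, hℓ2⟩ := Finset.mem_Icc.mp hℓ
    have hℓn : ℓ < n := by omega
    set gc : ℕ → ℝ := fun m => Real.cos (2 * π * ℓ * m / n) with hgc
    set gs : ℕ → ℝ := fun m => Real.sin (2 * π * ℓ * m / n) with hgs
    have hcast : ∀ m : ℕ, Complex.I * (2 * ↑π * (ℓ:ℂ) * (m:ℂ) / (n:ℂ)) =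
        ((2 * π * ℓ * m / n : ℝ) : ℂ) * Complex.I := by
      intro m; push_cast; ring
    have hre : ∀ m : ℕ, (Complex.exp (Complex.I * (2 * ↑π * (ℓ:ℂ) * (m:ℂ) / (n:ℂ)))).re = gc m :=
      fun m => by rw [hcast m, Complex.exp_ofReal_mul_I_re]
    have him : ∀ m : ℕ, (Complex.exp (Complex.I * (2 * ↑π * (ℓ:ℂ) * (m:ℂ) / (n:ℂ)))).im = gs m :=
      fun m => by rw [hcast m, Complex.exp_ofReal_mul_I_im]
    have hsum0 := sum_exp_zero (show 0 < ℓ by omega) hℓn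
    have hgc0 : ∑ m ∈ Finset.range n, gc m = 0 := by
      have := congrArg Complex.re hsum0
      rwa [Complex.re_sum, Finset.sum_congr rfl (fun m _ => hre m), Complex.zero_re] at this
    have hgs0 : ∑ m ∈ Finset.range n, gs m = 0 := by
      have := congrArg Complex.im hsum0
      rwa [Complex.im_sum, Finset.sum_congr rfl (fun m _ => him m), Complex.zero_im] at this
    have hsubset : {ω | t * D ≤
        ‖∑ s, Complex.exp (Complex.I * (2 * π * ℓ * (r s ω) / n))‖}
        ⊆ Bg gc ∪ Bg (fun m => -gc m) ∪ Bg gs ∪ Bg (fun m => -gs m) := by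
      intro ω hω
      simp only [Set.mem_setOf_eq] at hω
      set S := ∑ s, Complex.exp (Complex.I * (2 * π * (ℓ:ℂ) * ((r s ω : ℕ):ℂ) / n)) with hS
      set u : ℝ := ∑ s, gc (r s ω) with hu
      set v : ℝ := ∑ s, gs (r s ω) with hv
      have hSre : S.re = u := by
        rw [hS, Complex.re_sum, hu]
        exact Finset.sum_congr rfl fun s _ => hre (r s ω)
      have hSim : S.im = v := by
        rw [hS, Complex.im_sum, hv]
        exact Finset.sum_congr rfl fun s _ => him (r s ω)
      have hsq : (t * D) ^ 2 ≤ u ^ 2 + v ^ 2 := by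
        have h1 : (t * D) ^ 2 ≤ ‖S‖ ^ 2 :=
          pow_le_pow_left₀ (by positivity) hω 2
        rwa [Complex.sq_norm, Complex.normSq_apply, hSre, hSim, ← sq, ← sq] at h1
      clear_value u v
      have h2a : 2 * a ^ 2 = (t * D) ^ 2 := by rw [ha2]; ring
      have hdisj : a ^ 2 ≤ u ^ 2 ∨ a ^ 2 ≤ v ^ 2 := sq_disj (h2a ▸ hsq)
      have habs : a ≤ |u| ∨ a ≤ |v| :=
        hdisj.imp (le_abs_of_sq_le_sq' ha) (le_abs_of_sq_le_sq' ha)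
      simp only [hBg, Set.mem_union, Set.mem_setOf_eq]
      rcases habs with h | h
      · rcases le_abs.mp h with h' | h'
        · refine Or.inl (Or.inl (Or.inl ?_))
          rw [← hu]; exact h'
        · refine Or.inl (Or.inl (Or.inr ?_))
          rw [Finset.sum_neg_distrib, ← hu]
          linarith
      · rcases le_abs.mp h with h' | h'
        · refine Or.inl (Or.inr ?_)
          rw [← hv]; exact h'
        · refine Or.inr ?_
          rw [Finset.sum_neg_distrib, ← hv]
          linarith
    have hb1 := key gc (fun m => Real.abs_cos_le_one _) hgc0
    have hb2 := key (fun m => -gc m) (fun m => by rw [abs_neg]; exact Real.abs_cos_le_one _)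
      (by rw [Finset.sum_neg_distrib, hgc0, neg_zero])
    have hb3 := key gs (fun m => Real.abs_sin_le_one _) hgs0
    have hb4 := key (fun m => -gs m) (fun m => by rw [abs_neg]; exact Real.abs_sin_le_one _)
      (by rw [Finset.sum_neg_distrib, hgs0, neg_zero])
    calc P {ω | t * D ≤
          ‖∑ s, Complex.exp (Complex.I * (2 * π * ℓ * (r s ω) / n))‖}
        ≤ P (Bg gc ∪ Bg (fun m => -gc m) ∪ Bg gs ∪ Bg (fun m => -gs m)) :=
          measure_mono hsubset
      _ ≤ P (Bg gc) + P (Bg (fun m => -gc m)) + P (Bg gs) + P (Bg (fun m => -gs m)) := by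
          refine (measure_union_le _ _).trans ?_
          refine add_le_add ((measure_union_le _ _).trans (add_le_add ((measure_union_le _ _)) le_rfl)) le_rfl
      _ ≤ ENNReal.ofReal ((5 * (n:ℝ))⁻¹) + ENNReal.ofReal ((5 * (n:ℝ))⁻¹)
          + ENNReal.ofReal ((5 * (n:ℝ))⁻¹) + ENNReal.ofReal ((5 * (n:ℝ))⁻¹) := by
          exact add_le_add (add_le_add (add_le_add hb1 hb2) hb3) hb4
      _ = ENNReal.ofReal (4 * (5 * (n:ℝ))⁻¹) := by
          rw [← ENNReal.ofReal_add (by positivity) (by positivity),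
            ← ENNReal.ofReal_add (by positivity) (by positivity),
            ← ENNReal.ofReal_add (by positivity) (by positivity)]
          ring_nf
  -- union bound
  set G := {ω | ∀ ℓ : ℕ, 1 ≤ ℓ → ℓ ≤ n - 1 →
      ‖∑ s, Complex.exp (Complex.I * (2 * π * ℓ * (r s ω) / n))‖ / D < t} with hG
  have hGc : Gᶜ ⊆ ⋃ ℓ ∈ Finset.Icc 1 (n - 1),
      {ω | t * D ≤ ‖∑ s, Complex.exp (Complex.I * (2 * π * ℓ * (r s ω) / n))‖} := by
    intro ω hω
    simp only [hG, Set.mem_compl_iff, Set.mem_setOf_eq, not_forall] at hω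
    obtain ⟨ℓ, hℓ1, hℓ2, hℓ3⟩ := hω
    refine Set.mem_biUnion (Finset.mem_Icc.mpr ⟨hℓ1, hℓ2⟩) ?_
    simp only [Set.mem_setOf_eq]
    rw [not_lt] at hℓ3
    calc t * D ≤ ‖∑ s, Complex.exp (Complex.I * (2 * π * ℓ * (r s ω) / n))‖ / D * D := by
          exact mul_le_mul_of_nonneg_right hℓ3 hDR.le
      _ = _ := by field_simp
  have hGcbound : P Gᶜ ≤ ENNReal.ofReal 0.8 := by
    refine (measure_mono hGc).trans ?_
    refine (measure_biUnion_finset_le _ _).trans ?_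
    calc ∑ ℓ ∈ Finset.Icc 1 (n-1),
          P {ω | t * D ≤ ‖∑ s, Complex.exp (Complex.I * (2 * π * ℓ * (r s ω) / n))‖}
        ≤ ∑ ℓ ∈ Finset.Icc 1 (n-1), ENNReal.ofReal (4 * (5 * (n:ℝ))⁻¹) :=
          Finset.sum_le_sum hmain
      _ = (n - 1 : ℕ) • ENNReal.ofReal (4 * (5 * (n:ℝ))⁻¹) := by
          rw [Finset.sum_const, Nat.card_Icc]
          norm_num
      _ = ENNReal.ofReal ((n - 1 : ℕ) * (4 * (5 * (n:ℝ))⁻¹)) := by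
          rw [nsmul_eq_mul, ← ENNReal.ofReal_natCast (n-1),
            ← ENNReal.ofReal_mul (by positivity)]
      _ ≤ ENNReal.ofReal 0.8 := by
          refine ENNReal.ofReal_le_ofReal ?_
          have h1 : ((n - 1 : ℕ) : ℝ) ≤ (n : ℝ) := by
            exact_mod_cast Nat.sub_le n 1
          have h2 : ((n - 1 : ℕ) : ℝ) * (4 * (5 * (n:ℝ))⁻¹) ≤ (n:ℝ) * (4 * (5 * (n:ℝ))⁻¹) :=
            mul_le_mul_of_nonneg_right h1 (by positivity)
          refine h2.trans ?_
          rw [show (n:ℝ) * (4 * (5 * (n:ℝ))⁻¹) = 4 / 5 * ((n:ℝ) * (n:ℝ)⁻¹) by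
            field_simp]
          rw [mul_inv_cancel₀ hnR.ne', mul_one]
          norm_num
  have hone : (1 : ENNReal) ≤ P G + ENNReal.ofReal 0.8 := by
    calc (1 : ENNReal) = P Set.univ := (measure_univ).symm
      _ = P (G ∪ Gᶜ) := by rw [Set.union_compl_self]
      _ ≤ P G + P Gᶜ := measure_union_le _ _
      _ ≤ P G + ENNReal.ofReal 0.8 := add_le_add le_rfl hGcbound
  have : ENNReal.ofReal 0.2 = 1 - ENNReal.ofReal 0.8 := by
    rw [← ENNReal.ofReal_one, ← ENNReal.ofReal_sub _ (by norm_num)]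
    norm_num
  rw [this]
  exact tsub_le_iff_right.mpr hone
end

section
/- Let D ≥ 1 be an integer, let u ∈ ℂ^D be a fixed (deterministic) vector, and let z be a standard complex Gaussian vector in ℂ^D. Then for every constant γ with 0 < γ < ‖u‖²/D, Pr( ‖u + z‖² < (1 + γ) D ) ≤ exp( − D (‖u‖²/D − γ)² / (2 + 4 ‖u‖²/D) ), where ‖·‖ denotes the Euclidean norm on ℂ^D. -/
open scoped BigOperators NNReal ENNReal
open MeasureTheory ProbabilityTheory

section Aux

lemma exp_le_one_add' (t : ℝ) (ht : 0 ≤ t) : Real.exp (t - t^2/2) ≤ 1 + t := by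
  have key : ∀ s : ℝ, HasDerivAt (fun s => (1+s) * Real.exp (s^2/2 - s))
      (s^2 * Real.exp (s^2/2 - s)) s := by
    intro s
    have h1 : HasDerivAt (fun s : ℝ => s^2/2 - s) (s - 1) s := by
      have := ((hasDerivAt_pow 2 s).div_const 2).fun_sub (hasDerivAt_id' s)
      simpa using this
    have h3 := ((hasDerivAt_id s).const_add 1).fun_mul h1.exp
    simp only [id] at h3
    refine h3.congr_deriv ?_
    ring
  have mono : MonotoneOn (fun s => (1+s) * Real.exp (s^2/2 - s)) (Set.Ici 0) := by
    apply monotoneOn_of_deriv_nonneg (convex_Ici 0)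
    · exact (Continuous.mul (by continuity) (by continuity)).continuousOn
    · intro s _; exact (key s).differentiableAt.differentiableWithinAt
    · intro s _
      rw [(key s).deriv]
      positivity
  have h0 : (1:ℝ) ≤ (1+t) * Real.exp (t^2/2 - t) := by
    have := mono (Set.mem_Ici.2 le_rfl) (Set.mem_Ici.2 ht) ht
    simpa using this
  have hpos : 0 < Real.exp (t^2/2 - t) := Real.exp_pos _
  have h2 : Real.exp (t - t^2/2) * Real.exp (t^2/2 - t) ≤ (1+t) * Real.exp (t^2/2 - t) := by
    rw [← Real.exp_add]
    simpa using h0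
  exact le_of_mul_le_mul_right h2 hpos

lemma key_ineq' (μ γ t : ℝ) (hγ0 : 0 < γ) (hγμ : γ < μ) (htdef : t = (μ-γ)/(1+2*μ)) :
    t*(1+γ) - t*μ/(1+t) - (t - t^2/2) ≤ -((μ-γ)^2/(2+4*μ)) := by
  have hμ : 0 < μ := hγ0.trans hγμ
  have hden : (0:ℝ) < 1+2*μ := by linarith
  have ht : 0 < t := htdef ▸ div_pos (by linarith) hden
  have h1t : (0:ℝ) < 1 + t := by linarith
  have step1 : t*μ - t^2*μ ≤ t*μ/(1+t) := by
    rw [le_div_iff₀ h1t]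
    nlinarith [mul_pos (pow_pos ht 3) hμ]
  have step2 : t*γ - t*μ + t^2*(μ + 1/2) = -((μ-γ)^2/(2+4*μ)) := by
    rw [htdef]
    field_simp
    ring
  nlinarith [step1, step2]

lemma gauss_int' (t c : ℝ) (ht : 0 ≤ t) :
    ∫ x, Real.exp (-(t * (c + x)^2)) ∂(gaussianReal 0 (1/2 : ℝ≥0)) =
      Real.exp (-(t * c^2 / (1+t))) / Real.sqrt (1+t) := by
  have h1t : (0:ℝ) < 1 + t := by linarith
  rw [gaussianReal_of_var_ne_zero 0 (by norm_num : (1/2:ℝ≥0) ≠ 0)]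
  have hpdf : gaussianPDF 0 (1/2 : ℝ≥0) =
      fun x => ((Real.toNNReal (gaussianPDFReal 0 (1/2:ℝ≥0) x)) : ℝ≥0∞) := rfl
  rw [hpdf, integral_withDensity_eq_integral_smul
    (f := fun x => (gaussianPDFReal 0 (1/2:ℝ≥0) x).toNNReal)
    (by exact measurable_real_toNNReal.comp (measurable_gaussianPDFReal 0 (1/2:ℝ≥0)))]
  have hc : ((1/2:ℝ≥0):ℝ) = 1/2 := by norm_num
  have hptw : ∀ x : ℝ, (Real.toNNReal (gaussianPDFReal 0 (1/2:ℝ≥0) x)) •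
      Real.exp (-(t * (c + x)^2)) =
      (Real.sqrt Real.pi)⁻¹ * (Real.exp (-(t * c^2 / (1+t))) *
        Real.exp (-((1+t) * (x + t*c/(1+t))^2))) := by
    intro x
    rw [NNReal.smul_def, smul_eq_mul, Real.coe_toNNReal _ (gaussianPDFReal_nonneg _ _ _)]
    simp only [gaussianPDFReal, hc]
    rw [show 2 * Real.pi * (1/2) = Real.pi by ring, show (2:ℝ) * (1/2) = 1 by norm_num]
    rw [mul_assoc, ← Real.exp_add, ← Real.exp_add]
    congr 1
    congr 1
    field_simp
    ring
  simp_rw [hptw]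
  rw [integral_const_mul, integral_const_mul]
  rw [integral_add_right_eq_self (fun y => Real.exp (-((1+t) * y^2))) (t*c/(1+t))]
  rw [show (fun x : ℝ => Real.exp (-((1+t) * x^2))) = fun x : ℝ => Real.exp (-(1+t) * x^2) by
    funext x; rw [neg_mul]]
  rw [integral_gaussian (1+t)]
  rw [Real.sqrt_div Real.pi_pos.le]
  have hsp : Real.sqrt Real.pi ≠ 0 := by positivity
  field_simp

lemma mgf_shift_gauss' {Ω : Type*} [MeasurableSpace Ω] {P : Measure Ω} {g : Ω → ℝ}
    (hmap : Measure.map g P = gaussianReal 0 (1/2 : ℝ≥0)) (hg : AEMeasurable g P)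
    (c t : ℝ) (ht : 0 ≤ t) :
    mgf (fun ω => (c + g ω)^2) P (-t) =
      Real.exp (-(t * c^2 / (1+t))) / Real.sqrt (1+t) := by
  rw [mgf]
  have hint := integral_map (φ := g) hg
    (f := fun y : ℝ => Real.exp (-(t * (c + y)^2)))
    (Measurable.aestronglyMeasurable
      (((measurable_const.add measurable_id).pow_const 2).const_mul t).neg.exp)
  rw [hmap, gauss_int' t c ht] at hint
  rw [hint]
  congr 1 with ω
  simp only []
  rw [neg_mul]

lemma iIndepFun_of_ae_eq' {Ω ι : Type*} [MeasurableSpace Ω] {P : Measure Ω}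
    [IsProbabilityMeasure P]
    {f f' : ι → Ω → ℝ} (h : iIndepFun f P)
    (hff' : ∀ i, f i =ᵐ[P] f' i) : iIndepFun f' P := by
  rw [iIndepFun_iff_measure_inter_preimage_eq_mul] at h ⊢
  intro S sets hsets
  have hae : ∀ᵐ ω ∂P, ∀ i ∈ S, f i ω = f' i ω :=
    (MeasureTheory.ae_ball_iff S.countable_toSet).2 fun i _ => hff' i
  have h1 : (⋂ i ∈ S, f' i ⁻¹' sets i) =ᵐ[P] (⋂ i ∈ S, f i ⁻¹' sets i) := by
    rw [Filter.eventuallyEq_set]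
    filter_upwards [hae] with ω hω
    simp only [Set.mem_iInter, Set.mem_preimage]
    exact forall₂_congr fun i hi => by rw [hω i hi]
  rw [measure_congr h1, h S hsets]
  refine Finset.prod_congr rfl fun i hi => measure_congr ?_
  rw [Filter.eventuallyEq_set]
  filter_upwards [hff' i] with ω hω
  simp only [Set.mem_preimage, hω]

end Aux

/-- `z : Ω → ℂ^D` is a standard complex Gaussian vector (`z ~ CN(0, I_D)`):
its `2D` real coordinates (real and imaginary parts of the entries) are
independent real Gaussians with mean `0` and variance `1/2`. -/
def IsStdComplexGaussianVec {Ω : Type*} [MeasurableSpace Ω] (P : Measure Ω)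
    {D : ℕ} (z : Ω → Fin D → ℂ) : Prop :=
  (∀ p : Fin D × Bool,
      Measure.map (fun ω => if p.2 then (z ω p.1).im else (z ω p.1).re) P =
        gaussianReal 0 (1/2 : ℝ≥0)) ∧
    iIndepFun
      (fun (p : Fin D × Bool) ω => if p.2 then (z ω p.1).im else (z ω p.1).re) P

/-- (STATEMENT 6, the paper's Lemma 3) Threshold-based energy detector: for a fixed
vector `u ∈ ℂ^D` and a standard complex Gaussian vector `z ~ CN(0, I_D)`, and any
`0 < γ < ‖u‖²/D`,
`Pr(‖u + z‖² < (1+γ)D) ≤ exp(-D(‖u‖²/D - γ)² / (2 + 4‖u‖²/D))`. -/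
theorem energy_detector_lower_tail
    {Ω : Type*} [MeasurableSpace Ω] (P : Measure Ω) [IsProbabilityMeasure P]
    (D : ℕ) (hD : 1 ≤ D) (u : Fin D → ℂ) (z : Ω → Fin D → ℂ)
    (hz : IsStdComplexGaussianVec P z)
    (γ : ℝ) (hγ0 : 0 < γ) (hγ : γ < (∑ i, ‖u i‖ ^ 2) / D) :
    P {ω | ∑ i, ‖u i + z ω i‖ ^ 2 < (1 + γ) * D} ≤
      ENNReal.ofReal (Real.exp (-(D * ((∑ i, ‖u i‖ ^ 2) / D - γ) ^ 2) /
        (2 + 4 * ((∑ i, ‖u i‖ ^ 2) / D)))) := by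
  obtain ⟨hmap, hind⟩ := hz
  -- notation
  set Sv : ℝ := ∑ i, ‖u i‖ ^ 2 with hSv
  have hD0 : (0:ℝ) < D := by
    have : (1:ℝ) ≤ D := by exact_mod_cast hD
    linarith
  set μv : ℝ := Sv / D with hμv
  have hμpos : 0 < μv := hγ0.trans hγ
  set t : ℝ := (μv - γ) / (1 + 2 * μv) with htdef
  have ht0 : 0 < t := div_pos (by linarith) (by linarith)
  have h1t : (0:ℝ) < 1 + t := by linarith
  -- coordinates
  set g : Fin D × Bool → Ω → ℝ :=
    fun p ω => if p.2 then (z ω p.1).im else (z ω p.1).re with hgdef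
  set c : Fin D × Bool → ℝ :=
    fun p => if p.2 then (u p.1).im else (u p.1).re with hcdef
  have hgae : ∀ p, AEMeasurable (g p) P := by
    intro p
    by_contra h
    have h2 := hmap p
    rw [Measure.map_of_not_aemeasurable h] at h2
    have h3 := congrArg (fun m : Measure ℝ => m Set.univ) h2
    simp [measure_univ] at h3
  set g' : Fin D × Bool → Ω → ℝ := fun p => (hgae p).mk (g p) with hg'def
  have hg'meas : ∀ p, Measurable (g' p) := fun p => (hgae p).measurable_mk
  have hgg' : ∀ p, g p =ᵐ[P] g' p := fun p => (hgae p).ae_eq_mk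
  have hmap' : ∀ p, Measure.map (g' p) P = gaussianReal 0 (1/2 : ℝ≥0) := by
    intro p
    rw [← Measure.map_congr (hgg' p)]
    exact hmap p
  have hind' : iIndepFun g' P := iIndepFun_of_ae_eq' hind hgg'
  -- the squared variables
  set Y : Fin D × Bool → Ω → ℝ := fun p ω => (c p + g' p ω)^2 with hYdef
  have hYmeas : ∀ p, Measurable (Y p) :=
    fun p => (measurable_const.add (hg'meas p)).pow_const 2
  have hindY : iIndepFun Y P := by
    have := hind'.comp (g := fun p (x : ℝ) => (c p + x)^2)
      (fun p => (measurable_const.add measurable_id).pow_const 2)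
    exact this
  set X : Ω → ℝ := ∑ p, Y p with hXdef
  have hXapp : ∀ ω, X ω = ∑ p, Y p ω := by
    intro ω; rw [hXdef]; simp [Finset.sum_apply]
  have hXmeas : Measurable X := by
    rw [show X = fun ω => ∑ p, Y p ω from funext hXapp]
    exact Finset.measurable_sum _ fun p _ => hYmeas p
  have hXnonneg : ∀ ω, 0 ≤ X ω := by
    intro ω; rw [hXapp]
    exact Finset.sum_nonneg fun p _ => sq_nonneg _
  -- integrability for Chernoff
  have hint : Integrable (fun ω => Real.exp ((-t) * X ω)) P := by
    refine Integrable.mono' (integrable_const 1)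
      (Measurable.aestronglyMeasurable ((hXmeas.const_mul (-t)).exp)) ?_
    filter_upwards with ω
    rw [Real.norm_eq_abs, Real.abs_exp]
    rw [show (1:ℝ) = Real.exp 0 by simp]
    apply Real.exp_le_exp.2
    have := hXnonneg ω
    nlinarith
  -- Chernoff bound
  have hch := measure_le_le_exp_mul_mgf (μ := P) (X := X) (t := -t)
    ((1+γ) * D) (by linarith) hint
  -- mgf computation
  have hmgfY : ∀ p, mgf (Y p) P (-t) =
      Real.exp (-(t * (c p)^2 / (1+t))) / Real.sqrt (1+t) :=
    fun p => mgf_shift_gauss' (hmap' p) (hg'meas p).aemeasurable (c p) t ht0.le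
  have hsum_c : ∑ p : Fin D × Bool, (c p)^2 = Sv := by
    rw [hSv, Fintype.sum_prod_type]
    refine Finset.sum_congr rfl fun i _ => ?_
    rw [Fintype.sum_bool]
    simp only [hcdef, Bool.false_eq_true, if_true, if_false]
    rw [Complex.sq_norm, Complex.normSq_apply]
    ring
  have hmgfX : mgf X P (-t) = Real.exp (-(t * Sv / (1+t))) / (1+t)^D := by
    rw [hXdef, hindY.mgf_sum hYmeas Finset.univ]
    simp_rw [hmgfY]
    rw [Finset.prod_div_distrib, ← Real.exp_sum, Finset.prod_const]
    congr 1
    · congr 1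
      have : ∀ p : Fin D × Bool, -(t * (c p)^2 / (1+t)) = (-(t/(1+t))) * (c p)^2 := by
        intro p; ring
      simp_rw [this]
      rw [← Finset.mul_sum, hsum_c]
      ring
    · rw [Finset.card_univ, Fintype.card_prod, Fintype.card_fin, Fintype.card_bool,
        pow_mul', Real.sq_sqrt h1t.le]
  -- scalar estimate
  have hSveq : Sv = μv * D := by
    rw [hμv]; field_simp
  have hscalar : Real.exp (-(-t) * ((1+γ) * D)) * mgf X P (-t) ≤
      Real.exp (-(D * (μv - γ)^2) / (2 + 4 * μv)) := by
    rw [hmgfX, neg_neg]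
    have hA : Real.exp ((t - t^2/2) * D) ≤ (1+t)^D := by
      rw [show ((t - t^2/2) * D : ℝ) = (D:ℕ) * (t - t^2/2) by push_cast; ring,
        Real.exp_nat_mul]
      exact pow_le_pow_left₀ (Real.exp_pos _).le (exp_le_one_add' t ht0.le) D
    have hApos : (0:ℝ) < Real.exp ((t - t^2/2) * D) := Real.exp_pos _
    have hstep : Real.exp (t * ((1+γ) * D)) * (Real.exp (-(t * Sv / (1+t))) / (1+t)^D) ≤
        Real.exp (t * ((1+γ) * D)) * (Real.exp (-(t * Sv / (1+t))) /
          Real.exp ((t - t^2/2) * D)) := by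
      gcongr
    refine hstep.trans ?_
    rw [← Real.exp_sub, ← Real.exp_add]
    apply Real.exp_le_exp.2
    have hkey := key_ineq' μv γ t hγ0 hγ htdef
    have h2 : t * ((1+γ) * D) + (-(t * Sv / (1+t)) - (t - t^2/2) * D) =
        D * (t*(1+γ) - t*μv/(1+t) - (t - t^2/2)) := by
      rw [hSveq]; ring
    have h3 : -(D * (μv - γ)^2) / (2 + 4 * μv) = D * (-((μv-γ)^2/(2+4*μv))) := by
      ring
    rw [h2, h3]
    exact mul_le_mul_of_nonneg_left hkey hD0.le
  -- event manipulation
  have hrw : ∀ ω, ∑ i, ‖u i + z ω i‖ ^ 2 = ∑ p : Fin D × Bool, (c p + g p ω)^2 := by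
    intro ω
    rw [Fintype.sum_prod_type]
    refine Finset.sum_congr rfl fun i _ => ?_
    rw [Fintype.sum_bool]
    simp only [hcdef, hgdef, Bool.false_eq_true, if_true, if_false]
    rw [Complex.sq_norm, Complex.normSq_apply,
      Complex.add_re, Complex.add_im]
    ring
  have hset1 : {ω | ∑ i, ‖u i + z ω i‖ ^ 2 < (1 + γ) * D} =
      {ω | ∑ p : Fin D × Bool, (c p + g p ω)^2 < (1 + γ) * D} := by
    ext ω; simp only [Set.mem_setOf_eq, hrw ω]
  have hae : ∀ᵐ ω ∂P, ∀ p, g p ω = g' p ω := ae_all_iff.2 fun p => hgg' p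
  have hset2 : P {ω | ∑ p : Fin D × Bool, (c p + g p ω)^2 < (1 + γ) * D} =
      P {ω | ∑ p : Fin D × Bool, (c p + g' p ω)^2 < (1 + γ) * D} := by
    apply measure_congr
    rw [Filter.eventuallyEq_set]
    filter_upwards [hae] with ω hω
    have hsame : ∑ p : Fin D × Bool, (c p + g p ω)^2 =
        ∑ p : Fin D × Bool, (c p + g' p ω)^2 :=
      Finset.sum_congr rfl fun p _ => by rw [hω p]
    simp only [Set.mem_setOf_eq, hsame]
  -- conclude
  calc P {ω | ∑ i, ‖u i + z ω i‖ ^ 2 < (1 + γ) * D}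
      = P {ω | ∑ p : Fin D × Bool, (c p + g' p ω)^2 < (1 + γ) * D} := by
        rw [hset1, hset2]
    _ ≤ P {ω | X ω ≤ (1 + γ) * D} := by
        apply measure_mono
        intro ω hω
        simp only [Set.mem_setOf_eq] at hω ⊢
        rw [hXapp]
        exact le_of_lt hω
    _ = ENNReal.ofReal ((P {ω | X ω ≤ (1 + γ) * D}).toReal) :=
        (ENNReal.ofReal_toReal (measure_ne_top _ _)).symm
    _ ≤ ENNReal.ofReal (Real.exp (-(D * (μv - γ)^2) / (2 + 4 * μv))) :=
        ENNReal.ofReal_le_ofReal (hch.trans hscalar)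
end

section
/- Let A be a D×n complex matrix all of whose columns have unit Euclidean norm and whose mutual incoherence is at most μ̄ ≥ 0. Let ρ > 0 and let u ∈ ℂ^n be a vector with exactly s ≥ 1 nonzero entries, each of modulus at least √ρ. Then ‖A u‖² ≥ s ρ · max(0, 1 − μ̄ (s − 1)), where ‖·‖ denotes the Euclidean norm. -/
open scoped BigOperators

/-- (STATEMENT 15) Multi-ton bin energy lower bound: if `A` is a `D × n` complex matrix
with unit-norm columns and mutual incoherence at most `μ̄`, and `u ∈ ℂ^n` has exactly `s`
nonzero entries each of modulus at least `√ρ`, then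
`‖A u‖² ≥ s ρ max(0, 1 - μ̄(s-1))`. -/
theorem multiton_energy_lower_bound {D n : ℕ} (hD : 0 < D) (hn : 0 < n)
    (A : Matrix (Fin D) (Fin n) ℂ)
    (hcol : ∀ p : Fin n, ∑ i, ‖A i p‖ ^ 2 = 1)
    (μbar : ℝ) (hμbar : 0 ≤ μbar)
    (hcoh : ∀ p q : Fin n, p ≠ q →
      ‖∑ i, (starRingEnd ℂ) (A i p) * A i q‖ ≤ μbar)
    (ρ : ℝ) (hρ : 0 < ρ)
    (s : ℕ) (hs : 1 ≤ s)
    (u : Fin n → ℂ)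
    (hsupp : (Finset.univ.filter fun j => u j ≠ 0).card = s)
    (hmag : ∀ j : Fin n, u j ≠ 0 → Real.sqrt ρ ≤ ‖u j‖) :
    (s : ℝ) * ρ * max 0 (1 - μbar * ((s : ℝ) - 1)) ≤ ∑ i, ‖A.mulVec u i‖ ^ 2 := by
  classical
  rcases le_or_gt (1 - μbar * ((s : ℝ) - 1)) 0 with h0 | h0
  · rw [max_eq_left h0, mul_zero]
    positivity
  rw [max_eq_right h0.le]
  set T : Fin n → ℝ := fun p => ‖u p‖ with hT
  set S : Finset (Fin n) := Finset.univ.filter (fun j => u j ≠ 0) with hS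
  set G : Fin n → Fin n → ℂ := fun p q => ∑ i, (starRingEnd ℂ) (A i p) * A i q with hG
  -- column Gram diagonal is 1
  have hGdiag : ∀ p, G p p = 1 := by
    intro p
    have h1 : G p p = ((∑ i, ‖A i p‖ ^ 2 : ℝ) : ℂ) := by
      rw [hG]
      push_cast
      refine Finset.sum_congr rfl fun i _ => ?_
      rw [mul_comm, Complex.mul_conj, Complex.normSq_eq_norm_sq]
      simp
    rw [h1, hcol p]; norm_num
  -- algebraic expansion of the energy
  have alg : ∑ i, (starRingEnd ℂ) (A.mulVec u i) * A.mulVec u i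
      = ∑ p, ∑ q, (starRingEnd ℂ) (u p) * u q * G p q := by
    have step : ∀ i, (starRingEnd ℂ) (A.mulVec u i) * A.mulVec u i
        = ∑ p, ∑ q, (starRingEnd ℂ) (u p) * u q * ((starRingEnd ℂ) (A i p) * A i q) := by
      intro i
      simp only [Matrix.mulVec, dotProduct, map_sum, map_mul, Finset.sum_mul,
        Finset.mul_sum]
      conv_lhs => rw [Finset.sum_comm]
      exact Finset.sum_congr rfl fun p _ => Finset.sum_congr rfl fun q _ => by ring
    simp only [step, hG, Finset.mul_sum]
    conv_lhs => rw [Finset.sum_comm]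
    refine Finset.sum_congr rfl fun p _ => ?_
    conv_lhs => rw [Finset.sum_comm]
  have hE : (∑ i, ‖A.mulVec u i‖ ^ 2 : ℝ)
      = (∑ p, ∑ q, (starRingEnd ℂ) (u p) * u q * G p q).re := by
    rw [← alg, Complex.re_sum]
    refine Finset.sum_congr rfl fun i _ => ?_
    rw [← Complex.normSq_eq_norm_sq, mul_comm, Complex.mul_conj, Complex.ofReal_re]
  -- split diagonal
  set cross : ℂ := ∑ p, ∑ q ∈ Finset.univ.erase p, (starRingEnd ℂ) (u p) * u q * G p q
    with hcrossdef
  have hsplit : ∑ p, ∑ q, (starRingEnd ℂ) (u p) * u q * G p q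
      = ((∑ p, Complex.normSq (u p) : ℝ) : ℂ) + cross := by
    rw [hcrossdef]
    push_cast
    rw [← Finset.sum_add_distrib]
    refine Finset.sum_congr rfl fun p _ => ?_
    rw [← Finset.add_sum_erase _ _ (Finset.mem_univ p), hGdiag p, mul_one, mul_comm,
      Complex.mul_conj]
  -- sums restricted to support
  have hTzero : ∀ x, x ∉ S → T x = 0 := by
    intro x hx
    have hx0 : u x = 0 := by
      by_contra h
      exact hx (by simp [hS, h])
    simp [hT, hx0]
  have hTsum : ∑ p, T p = ∑ p ∈ S, T p :=
    (Finset.sum_subset (Finset.subset_univ S) (fun x _ hx => hTzero x hx)).symm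
  have hTsq : ∑ p, T p ^ 2 = ∑ p ∈ S, T p ^ 2 :=
    (Finset.sum_subset (Finset.subset_univ S) (fun x _ hx => by rw [hTzero x hx]; ring)).symm
  set N : ℝ := ∑ p ∈ S, T p ^ 2 with hNdef
  have hTnonneg : ∀ p, 0 ≤ T p := fun p => norm_nonneg _
  -- lower bound on N
  have hNlb : (s : ℝ) * ρ ≤ N := by
    have : ∀ p ∈ S, ρ ≤ T p ^ 2 := by
      intro p hp
      have hup : u p ≠ 0 := by simpa [hS] using hp
      have h1 := hmag p hup
      calc ρ = Real.sqrt ρ ^ 2 := (Real.sq_sqrt hρ.le).symm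
        _ ≤ T p ^ 2 := by
            have := Real.sqrt_nonneg ρ
            nlinarith
    calc (s : ℝ) * ρ = S.card * ρ := by rw [hsupp]
      _ = ∑ _p ∈ S, ρ := by rw [Finset.sum_const, nsmul_eq_mul]
      _ ≤ N := Finset.sum_le_sum this
  -- bound on cross term
  have hXbound : ∑ p, ∑ q ∈ Finset.univ.erase p, T p * T q ≤ ((s : ℝ) - 1) * N := by
    have hX : ∑ p, ∑ q ∈ Finset.univ.erase p, T p * T q
        = (∑ p, T p) ^ 2 - ∑ p, T p ^ 2 := by
      have h1 : ∀ p : Fin n, ∑ q ∈ Finset.univ.erase p, T p * T q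
          = T p * ((∑ q, T q) - T p) := by
        intro p
        rw [← Finset.mul_sum, Finset.sum_erase_eq_sub (Finset.mem_univ p)]
      simp only [h1, mul_sub]
      rw [Finset.sum_sub_distrib, ← Finset.sum_mul, sq]
      congr 1
      exact Finset.sum_congr rfl fun p _ => (sq (T p)).symm
    have hCS : (∑ p ∈ S, T p) ^ 2 ≤ (S.card : ℝ) * ∑ p ∈ S, T p ^ 2 :=
      sq_sum_le_card_mul_sum_sq
    rw [hX, hTsum, hTsq]
    rw [hsupp] at hCS
    linarith
  have habs : ‖cross‖ ≤ μbar * (((s : ℝ) - 1) * N) := by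
    have h1 : ‖cross‖ ≤ ∑ p, ∑ q ∈ Finset.univ.erase p, μbar * (T p * T q) := by
      refine (norm_sum_le _ _).trans ?_
      refine Finset.sum_le_sum fun p _ => ?_
      refine (norm_sum_le _ _).trans ?_
      refine Finset.sum_le_sum fun q hq => ?_
      have hpq : p ≠ q := fun h => (Finset.ne_of_mem_erase hq) h.symm
      rw [norm_mul, norm_mul, Complex.norm_conj]
      calc ‖u p‖ * ‖u q‖ * ‖G p q‖
          ≤ ‖u p‖ * ‖u q‖ * μbar := by
            have := hcoh p q hpq
            have h2 : (0:ℝ) ≤ ‖u p‖ * ‖u q‖ := by positivity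
            exact mul_le_mul_of_nonneg_left (by simpa [hG] using this) h2
        _ = μbar * (T p * T q) := by rw [hT]; ring
    have h2 : ∑ p, ∑ q ∈ Finset.univ.erase p, μbar * (T p * T q)
        = μbar * ∑ p, ∑ q ∈ Finset.univ.erase p, T p * T q := by
      simp only [Finset.mul_sum]
    have h3 : μbar * ∑ p, ∑ q ∈ Finset.univ.erase p, T p * T q
        ≤ μbar * (((s : ℝ) - 1) * N) := mul_le_mul_of_nonneg_left hXbound hμbar
    linarith [h1, h2 ▸ h1]
  -- put it together
  have hre : -‖cross‖ ≤ cross.re := (abs_le.mp (Complex.abs_re_le_norm cross)).1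
  have hNsq : ∑ p, Complex.normSq (u p) = N := by
    rw [← hTsq]
    exact Finset.sum_congr rfl fun p _ => by rw [Complex.normSq_eq_norm_sq, hT]
  rw [hE, hsplit]
  have : (((∑ p, Complex.normSq (u p) : ℝ) : ℂ) + cross).re
      = (∑ p, Complex.normSq (u p)) + cross.re := by simp
  rw [this, hNsq]
  nlinarith [mul_le_mul_of_nonneg_right hNlb h0.le, habs, hre]
end

section
/- Let D ≥ 1 be an integer, let a ∈ ℂ^D be a fixed vector each of whose entries has modulus 1, let ρ > 0, let c ∈ ℂ with |c| = √ρ, and let z be a standard complex Gaussian vector in ℂ^D. Then for every γ with 0 < γ < ρ, Pr( ‖c·a + z‖² < (1 + γ) D ) ≤ exp( − D (ρ − γ)² / (2 + 4ρ) ), where ‖·‖ denotes the Euclidean norm on ℂ^D. -/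
open scoped BigOperators NNReal
open MeasureTheory ProbabilityTheory

lemma aux_inv_le (t : ℝ) (ht : 0 ≤ t) : (1 + t)⁻¹ ≤ Real.exp (t^2/2 - t) := by
  set f : ℝ → ℝ := fun x => (1 + x) * Real.exp (x^2/2 - x) with hf
  have hderiv : ∀ x, HasDerivAt f (x^2 * Real.exp (x^2/2 - x)) x := by
    intro x
    have h1 : HasDerivAt (fun x : ℝ => x^2/2 - x) (x - 1) x := by
      have := ((hasDerivAt_pow 2 x).div_const 2).sub (hasDerivAt_id x)
      exact this.congr_deriv (by push_cast; ring)
    have h2 := h1.exp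
    have h3 : HasDerivAt (fun x : ℝ => 1 + x) 1 x :=
      (hasDerivAt_id x).const_add 1
    have := h3.mul h2
    exact this.congr_deriv (by ring)
  have hmono : MonotoneOn f (Set.Ici 0) := by
    refine monotoneOn_of_deriv_nonneg (convex_Ici 0) ?_ ?_ ?_
    · exact (Continuous.mul (by continuity) (by continuity)).continuousOn
    · intro x _
      exact (hderiv x).differentiableAt.differentiableWithinAt
    · intro x hx
      rw [(hderiv x).deriv]
      positivity
  have h01 : f 0 ≤ f t := hmono Set.self_mem_Ici ht ht
  have h0 : f 0 = 1 := by simp [hf]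
  rw [h0] at h01
  simp only [hf] at h01
  rw [inv_le_iff_one_le_mul₀ (by linarith), mul_comm]
  exact h01

lemma aux_pdf (x : ℝ) :
    gaussianPDFReal 0 (1/2 : ℝ≥0) x = (Real.sqrt Real.pi)⁻¹ * Real.exp (-x^2) := by
  have h2 : Real.sqrt 2 ≠ 0 := by positivity
  simp only [gaussianPDFReal]
  norm_num
  field_simp

lemma aux_vol_integral (m t : ℝ) (ht : 0 < t) :
    ∫ x : ℝ, gaussianPDFReal 0 (1/2 : ℝ≥0) x * Real.exp (-t * (m + x)^2) =
      Real.exp (-t * m^2 / (1+t)) / Real.sqrt (1+t) := by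
  have h1t : (0:ℝ) < 1 + t := by linarith
  have key : ∀ x : ℝ, gaussianPDFReal 0 (1/2 : ℝ≥0) x * Real.exp (-t * (m + x)^2)
      = ((Real.sqrt Real.pi)⁻¹ * Real.exp (-t * m^2 / (1+t))) *
        Real.exp (-(1+t) * (x + t*m/(1+t))^2) := by
    intro x
    rw [aux_pdf, mul_assoc, ← Real.exp_add, mul_assoc, ← Real.exp_add]
    congr 2
    field_simp
    ring
  simp_rw [key]
  rw [integral_const_mul]
  have h2 : ∫ x : ℝ, Real.exp (-(1+t) * (x + t*m/(1+t))^2)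
      = Real.sqrt (Real.pi / (1+t)) := by
    rw [integral_add_right_eq_self (fun x => Real.exp (-(1+t) * x^2)) (t*m/(1+t))]
    exact integral_gaussian (1+t)
  rw [h2, Real.sqrt_div Real.pi_nonneg]
  have hπ : Real.sqrt Real.pi ≠ 0 := by positivity
  have h1 : Real.sqrt (1+t) ≠ 0 := by positivity
  field_simp

lemma aux_gauss_integral (m t : ℝ) (ht : 0 < t) :
    ∫ x, Real.exp (-t * (m + x)^2) ∂(gaussianReal 0 (1/2 : ℝ≥0)) =
      Real.exp (-t * m^2 / (1+t)) / Real.sqrt (1+t) := by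
  rw [gaussianReal_of_var_ne_zero 0 (by norm_num : (1/2 : ℝ≥0) ≠ 0)]
  have hd : (gaussianPDF 0 (1/2 : ℝ≥0)) =
      fun x => ((gaussianPDFReal 0 (1/2 : ℝ≥0) x).toNNReal : ENNReal) := rfl
  rw [hd]
  rw [integral_withDensity_eq_integral_smul
    ((measurable_gaussianPDFReal 0 (1/2 : ℝ≥0)).real_toNNReal)]
  rw [← aux_vol_integral m t ht]
  congr 1 with x
  rw [NNReal.smul_def, smul_eq_mul, Real.coe_toNNReal _ (gaussianPDFReal_nonneg 0 _ x)]

lemma aux_mgf {Ω : Type*} [MeasurableSpace Ω] (P : Measure Ω) [IsProbabilityMeasure P]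
    (g : Ω → ℝ) (hg : AEMeasurable g P)
    (hmap : Measure.map g P = gaussianReal 0 (1/2 : ℝ≥0))
    (m t : ℝ) (ht : 0 < t) :
    mgf (fun ω => (m + g ω)^2) P (-t) =
      Real.exp (-t * m^2 / (1+t)) / Real.sqrt (1+t) := by
  have h1 : mgf (fun ω => (m + g ω)^2) P (-t)
      = ∫ ω, Real.exp (-t * (m + g ω)^2) ∂P := by
    simp [mgf]
  have hm : Measurable fun x : ℝ => Real.exp (-t * (m + x)^2) := by
    have h0 : Measurable fun x : ℝ => m + x := measurable_const.add measurable_id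
    exact ((h0.pow_const 2).const_mul (-t)).exp
  rw [h1, ← aux_gauss_integral m t ht, ← hmap, integral_map hg hm.aestronglyMeasurable]

lemma aux_iIndepFun_ae {Ω ι : Type*} [MeasurableSpace Ω] {P : Measure Ω}
    {β : ι → Type*} {m : ∀ i, MeasurableSpace (β i)} {f g : ∀ i, Ω → β i}
    (hf : iIndepFun (m := m) f P) (h : ∀ i, f i =ᵐ[P] g i) : iIndepFun (m := m) g P := by
  rw [iIndepFun_iff_measure_inter_preimage_eq_mul] at hf ⊢
  intro S sets hsets
  have hae : ∀ᵐ ω ∂P, ∀ i ∈ S, f i ω = g i ω :=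
    (ae_ball_iff S.countable_toSet).2 fun i _ => h i
  have h1 : P (⋂ i ∈ S, g i ⁻¹' sets i) = P (⋂ i ∈ S, f i ⁻¹' sets i) := by
    refine measure_congr ?_
    filter_upwards [hae] with ω hω
    show (ω ∈ ⋂ i ∈ S, g i ⁻¹' sets i) = (ω ∈ ⋂ i ∈ S, f i ⁻¹' sets i)
    simp only [Set.mem_iInter₂, Set.mem_preimage, eq_iff_iff]
    constructor <;> intro h' i hi
    · rw [hω i hi]; exact h' i hi
    · rw [← hω i hi]; exact h' i hi
  have h2 : ∀ i ∈ S, P (g i ⁻¹' sets i) = P (f i ⁻¹' sets i) := by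
    intro i hi
    refine measure_congr ?_
    filter_upwards [h i] with ω hω
    show (ω ∈ g i ⁻¹' sets i) = (ω ∈ f i ⁻¹' sets i)
    simp only [Set.mem_preimage, eq_iff_iff, hω]
  rw [h1, Finset.prod_congr rfl h2]
  exact hf S hsets

lemma aux_final (ρ γ : ℝ) (D : ℕ) (hρ : 0 < ρ) (hγ0 : 0 < γ) (hγ : γ < ρ)
    (t : ℝ) (htdef : t = (ρ-γ)/(1+2*ρ)) :
    Real.exp (t * ((1+γ)*D)) *
      (Real.exp (-t * (ρ*D) / (1+t)) / (1+t)^D)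
      ≤ Real.exp (-(D:ℝ) * (ρ-γ)^2 / (2+4*ρ)) := by
  have h2ρ : (0:ℝ) < 1 + 2*ρ := by linarith
  have ht0 : 0 < t := htdef ▸ div_pos (by linarith) h2ρ
  have ht1 : t < 1 := by
    rw [htdef, div_lt_one h2ρ]; linarith
  have h1t : (0:ℝ) < 1 + t := by linarith
  have hb1 : ((1+t)^D)⁻¹ ≤ Real.exp ((D:ℝ)*(t^2/2 - t)) := by
    rw [← inv_pow, Real.exp_nat_mul]
    exact pow_le_pow_left₀ (by positivity) (aux_inv_le t ht0.le) D
  have hb2 : Real.exp (-t * (ρ*D) / (1+t)) ≤ Real.exp (-t * (ρ*D) * (1-t)) := by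
    apply Real.exp_le_exp.mpr
    rw [div_le_iff₀ h1t]
    have hD0 : (0:ℝ) ≤ (D:ℝ) := Nat.cast_nonneg D
    nlinarith [mul_nonneg (mul_nonneg ht0.le hρ.le) hD0]
  have key : Real.exp (t * ((1+γ)*D)) * (Real.exp (-t * (ρ*D) * (1-t)) *
      Real.exp ((D:ℝ)*(t^2/2 - t))) ≤ Real.exp (-(D:ℝ) * (ρ-γ)^2 / (2+4*ρ)) := by
    rw [← Real.exp_add, ← Real.exp_add]
    apply Real.exp_le_exp.mpr
    apply le_of_eq
    rw [htdef]
    field_simp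
    ring
  calc Real.exp (t * ((1+γ)*D)) * (Real.exp (-t * (ρ*D) / (1+t)) / (1+t)^D)
      ≤ Real.exp (t * ((1+γ)*D)) * (Real.exp (-t * (ρ*D) * (1-t)) *
        Real.exp ((D:ℝ)*(t^2/2 - t))) := by
        rw [div_eq_mul_inv]
        apply mul_le_mul_of_nonneg_left _ (Real.exp_pos _).le
        exact mul_le_mul hb2 hb1 (by positivity) (Real.exp_pos _).le
    _ ≤ _ := key

/-- (STATEMENT 16) Singleton-to-zeroton misclassification bound: for a fixed vector
`a ∈ ℂ^D` with unit-modulus entries, a coefficient `c` with `|c| = √ρ`, a standard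
complex Gaussian vector `z ~ CN(0, I_D)`, and any `0 < γ < ρ`,
`Pr(‖c·a + z‖² < (1+γ)D) ≤ exp(-D(ρ-γ)²/(2+4ρ))`. -/
theorem singleton_zeroton_misclassification
    {Ω : Type*} [MeasurableSpace Ω] (P : Measure Ω) [IsProbabilityMeasure P]
    (D : ℕ) (hD : 1 ≤ D) (a : Fin D → ℂ) (ha : ∀ i, ‖a i‖ = 1)
    (ρ : ℝ) (hρ : 0 < ρ) (c : ℂ) (hc : ‖c‖ = Real.sqrt ρ)
    (z : Ω → Fin D → ℂ) (hz : IsStdComplexGaussianVec P z)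
    (γ : ℝ) (hγ0 : 0 < γ) (hγ : γ < ρ) :
    P {ω | ∑ i, ‖c * a i + z ω i‖ ^ 2 < (1 + γ) * D} ≤
      ENNReal.ofReal (Real.exp (-(D : ℝ) * (ρ - γ) ^ 2 / (2 + 4 * ρ))) := by
  classical
  obtain ⟨hmapz, hindz⟩ := hz
  set t : ℝ := (ρ - γ)/(1 + 2*ρ) with htdef
  have h2ρ : (0:ℝ) < 1 + 2*ρ := by linarith
  have ht0 : 0 < t := div_pos (by linarith) h2ρ
  have h1t : (0:ℝ) < 1 + t := by linarith
  have hne : (gaussianReal 0 (1/2 : ℝ≥0)) ≠ 0 := IsProbabilityMeasure.ne_zero _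
  have hgae : ∀ p : Fin D × Bool,
      AEMeasurable (fun ω => if p.2 then (z ω p.1).im else (z ω p.1).re) P := by
    intro p
    by_contra h
    exact hne ((hmapz p).symm.trans (Measure.map_of_not_aemeasurable h))
  set g' : Fin D × Bool → Ω → ℝ := fun p => (hgae p).mk _ with hg'def
  have hg'meas : ∀ p, Measurable (g' p) := fun p => (hgae p).measurable_mk
  have heq : ∀ p, (fun ω => if p.2 then (z ω p.1).im else (z ω p.1).re) =ᵐ[P] g' p :=
    fun p => (hgae p).ae_eq_mk
  have hmap' : ∀ p, Measure.map (g' p) P = gaussianReal 0 (1/2 : ℝ≥0) := fun p =>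
    (Measure.map_congr (heq p)).symm.trans (hmapz p)
  have hind' : iIndepFun g' P := aux_iIndepFun_ae hindz heq
  set μv : Fin D × Bool → ℝ := fun p => if p.2 then (c * a p.1).im else (c * a p.1).re
    with hμdef
  set X : Fin D × Bool → Ω → ℝ := fun p ω => (μv p + g' p ω)^2 with hXdef
  have hXmeas : ∀ p, Measurable (X p) := fun p =>
    (measurable_const.add (hg'meas p)).pow_const 2
  have hXind : iIndepFun X P :=
    hind'.comp (fun p (x : ℝ) => (μv p + x)^2)
      (fun p => (measurable_const.add measurable_id).pow_const 2)
  -- sum of squared means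
  have habs : ∀ i, (c * a i).re^2 + (c * a i).im^2 = ρ := by
    intro i
    have h1 : ‖c * a i‖ ^ 2 = ρ := by
      rw [norm_mul, hc, ha i, mul_one, Real.sq_sqrt hρ.le]
    rw [Complex.sq_norm, Complex.normSq_apply] at h1
    rw [pow_two, pow_two]
    exact h1
  have hsumμ : ∑ p : Fin D × Bool, (μv p)^2 = ρ * D := by
    rw [Fintype.sum_prod_type]
    have hinner : ∀ i : Fin D, ∑ b : Bool, μv (i, b)^2 = ρ := by
      intro i
      rw [Fintype.sum_bool]
      show (c * a i).im ^ 2 + (c * a i).re ^ 2 = ρ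
      linarith [habs i]
    rw [Finset.sum_congr rfl (fun i _ => hinner i), Finset.sum_const, Finset.card_univ,
      Fintype.card_fin, nsmul_eq_mul, mul_comm]
  -- pointwise rewriting of the event
  have hpt : ∀ ω, ∑ i, ‖c * a i + z ω i‖ ^ 2 =
      ∑ p : Fin D × Bool, (μv p + (if p.2 then (z ω p.1).im else (z ω p.1).re))^2 := by
    intro ω
    rw [Fintype.sum_prod_type]
    refine Finset.sum_congr rfl fun i _ => ?_
    rw [Fintype.sum_bool]
    show ‖c * a i + z ω i‖ ^ 2 =
      ((c * a i).im + (z ω i).im) ^ 2 + ((c * a i).re + (z ω i).re) ^ 2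
    rw [Complex.sq_norm, Complex.normSq_apply,
      Complex.add_re, Complex.add_im]
    ring
  have haeeq : ∀ᵐ ω ∂P, ∑ i, ‖c * a i + z ω i‖ ^ 2 = (∑ p : Fin D × Bool, X p) ω := by
    have hall : ∀ᵐ ω ∂P, ∀ p : Fin D × Bool,
        (if p.2 then (z ω p.1).im else (z ω p.1).re) = g' p ω :=
      ae_all_iff.2 fun p => heq p
    filter_upwards [hall] with ω hω
    rw [hpt ω, Finset.sum_apply]
    exact Finset.sum_congr rfl fun p _ => by rw [hω p]
  set Y : Ω → ℝ := ∑ p : Fin D × Bool, X p with hYdef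
  have hPeq : P {ω | ∑ i, ‖c * a i + z ω i‖ ^ 2 < (1 + γ) * D} =
      P {ω | Y ω < (1 + γ) * D} := by
    refine measure_congr ?_
    filter_upwards [haeeq] with ω hω
    show (∑ i, ‖c * a i + z ω i‖ ^ 2 < (1 + γ) * D) = (Y ω < (1 + γ) * D)
    rw [hω]
  have hYmeas : Measurable Y := by
    rw [hYdef]
    have h := Finset.measurable_sum Finset.univ fun (p : Fin D × Bool) _ => hXmeas p
    have hfun : (∑ p : Fin D × Bool, X p) = fun ω => ∑ p : Fin D × Bool, X p ω := by
      funext ω; exact Finset.sum_apply ω _ _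
    rw [hfun]; exact h
  have hY0 : ∀ ω, 0 ≤ Y ω := by
    intro ω
    rw [hYdef, Finset.sum_apply]
    exact Finset.sum_nonneg fun p _ => sq_nonneg _
  have hint : Integrable (fun ω => Real.exp (-t * Y ω)) P := by
    refine Integrable.mono' (integrable_const 1) ?_ ?_
    · exact ((hYmeas.const_mul (-t)).exp).aestronglyMeasurable
    · refine ae_of_all _ fun ω => ?_
      rw [Real.norm_eq_abs, Real.abs_exp]
      apply Real.exp_le_one_iff.mpr
      have := hY0 ω
      nlinarith
  have hch := measure_le_le_exp_mul_mgf (μ := P) (X := Y) ((1+γ)*(D:ℝ))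
    (neg_nonpos.mpr ht0.le) hint
  have hmgfs : mgf Y P (-t) = Real.exp (-t * (ρ*D) / (1+t)) / (1+t)^D := by
    rw [hYdef, hXind.mgf_sum hXmeas Finset.univ]
    have heach : ∀ p, mgf (X p) P (-t) =
        Real.exp (-t * (μv p)^2/(1+t)) / Real.sqrt (1+t) := fun p =>
      aux_mgf P (g' p) (hg'meas p).aemeasurable (hmap' p) (μv p) t ht0
    rw [Finset.prod_congr rfl fun p _ => heach p, Finset.prod_div_distrib,
      ← Real.exp_sum, Finset.prod_const, Finset.card_univ]
    congr 1
    · rw [← Finset.sum_div, ← Finset.mul_sum, hsumμ]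
    · rw [Fintype.card_prod, Fintype.card_fin, Fintype.card_bool, pow_mul',
        Real.sq_sqrt h1t.le]
  have hreal : (P {ω | Y ω ≤ (1+γ)*(D:ℝ)}).toReal ≤
      Real.exp (-(D:ℝ) * (ρ-γ)^2 / (2+4*ρ)) := by
    refine hch.trans ?_
    rw [neg_neg, hmgfs]
    exact aux_final ρ γ D hρ hγ0 hγ t htdef
  calc P {ω | ∑ i, ‖c * a i + z ω i‖ ^ 2 < (1 + γ) * D}
      = P {ω | Y ω < (1 + γ) * D} := hPeq
    _ ≤ P {ω | Y ω ≤ (1 + γ) * (D:ℝ)} := by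
        apply measure_mono
        intro ω h
        simp only [Set.mem_setOf_eq] at h ⊢
        exact le_of_lt h
    _ = ENNReal.ofReal ((P {ω | Y ω ≤ (1 + γ) * (D:ℝ)}).toReal) :=
        (ENNReal.ofReal_toReal (measure_ne_top _ _)).symm
    _ ≤ ENNReal.ofReal (Real.exp (-(D : ℝ) * (ρ - γ) ^ 2 / (2 + 4 * ρ))) :=
        ENNReal.ofReal_le_ofReal hreal
end
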